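/- arXiv:2211.14574 — 2 statements merged into one kernel-verified Lean document; each statement's English description precedes it below -/
import Mathlib

section
/- Let A be a real s×s lower-triangular matrix whose diagonal entries are all strictly positive. Then there exists a constant C > 0 such that ‖z (I − zA)⁻¹‖ ≤ C for every z ∈ ℂ with Re(z) ≤ 0. -/
open Matrix

attribute [local instance] Matrix.linftyOpNormedAddCommGroup

/-- For a lower-triangular real matrix `A` with strictly positive diagonal,
`z(I − zA)⁻¹` is uniformly bounded on the closed left half-plane. -/
theorem stmt_7 (s : ℕ) (A : Matrix (Fin s) (Fin s) ℝ)
    (hlow : ∀ i j : Fin s, i < j → A i j = 0)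
    (hdiag : ∀ i : Fin s, 0 < A i i) :
    ∃ C : ℝ, 0 < C ∧ ∀ z : ℂ, z.re ≤ 0 →
      ‖z • ((1 : Matrix (Fin s) (Fin s) ℂ) - z • A.map Complex.ofReal)⁻¹‖ ≤ C := by
  set Ac : Matrix (Fin s) (Fin s) ℂ := A.map Complex.ofReal with hAcdef
  -- determinant of 1 - z • Ac
  have htri : ∀ z : ℂ, ((1 : Matrix (Fin s) (Fin s) ℂ) - z • Ac).BlockTriangular OrderDual.toDual := by
    intro z i j hij
    have hij' : i < j := hij
    simp [Ac, Matrix.one_apply, Fin.ne_of_lt hij', hlow i j hij', Matrix.map_apply]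
  have hdet : ∀ z : ℂ, ((1 : Matrix (Fin s) (Fin s) ℂ) - z • Ac).det
      = ∏ i, (1 - z * (A i i : ℂ)) := by
    intro z
    rw [Matrix.det_of_lowerTriangular _ (htri z)]
    refine Finset.prod_congr rfl fun i _ => ?_
    simp [Ac, Matrix.one_apply, Matrix.map_apply]
  -- the determinant is nonzero on the closed left half-plane
  have hdet_ne : ∀ z : ℂ, z.re ≤ 0 → ((1 : Matrix (Fin s) (Fin s) ℂ) - z • Ac).det ≠ 0 := by
    intro z hz
    rw [hdet]
    refine Finset.prod_ne_zero_iff.2 fun i _ => ?_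
    intro h
    have hre : (1 - z * (A i i : ℂ)).re = 1 - z.re * A i i := by simp
    have : (0:ℝ) < 1 - z.re * A i i := by nlinarith [hdiag i]
    rw [h] at hre
    simp at hre
    nlinarith
  -- continuity helpers
  have hcont1 : Continuous fun z : ℂ => (1 : Matrix (Fin s) (Fin s) ℂ) - z • Ac :=
    continuous_const.sub (continuous_id.smul continuous_const)
  -- det Ac ≠ 0
  have hdetAc : Ac.det ≠ 0 := by
    have : Ac.det = ∏ i, (A i i : ℂ) := by
      rw [Matrix.det_of_lowerTriangular]
      · exact Finset.prod_congr rfl fun i _ => rfl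
      · intro i j hij
        have hij' : (i:Fin s) < j := hij
        simp [Ac, hlow i j hij', Matrix.map_apply]
    rw [this]
    refine Finset.prod_ne_zero_iff.2 fun i _ => ?_
    exact_mod_cast (hdiag i).ne'
  -- choose ε so that det (Ac - w • 1) ≠ 0 for ‖w‖ ≤ ε
  have hcont2 : Continuous fun w : ℂ => (Ac - w • (1 : Matrix (Fin s) (Fin s) ℂ)).det :=
    (continuous_const.sub (continuous_id.smul continuous_const)).matrix_det
  have h0 : (Ac - (0:ℂ) • (1 : Matrix (Fin s) (Fin s) ℂ)).det ≠ 0 := by simpa using hdetAc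
  obtain ⟨ε, hε, hball⟩ : ∃ ε > 0, ∀ w : ℂ, ‖w‖ ≤ ε →
      (Ac - w • (1 : Matrix (Fin s) (Fin s) ℂ)).det ≠ 0 := by
    have : {w : ℂ | (Ac - w • (1 : Matrix (Fin s) (Fin s) ℂ)).det ≠ 0} ∈ nhds (0:ℂ) :=
      (hcont2.isOpen_preimage _ isOpen_compl_singleton).mem_nhds h0
    obtain ⟨ε, hε, hsub⟩ := Metric.mem_nhds_iff.1 this
    refine ⟨ε/2, by linarith, fun w hw => hsub ?_⟩
    simp only [Metric.mem_ball, dist_zero_right]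
    linarith [hw]
  -- bound for the "infinity" part
  have hcompact1 : IsCompact (Metric.closedBall (0:ℂ) ε) := isCompact_closedBall _ _
  have hcontg : ContinuousOn (fun w : ℂ => (Ac - w • (1 : Matrix (Fin s) (Fin s) ℂ))⁻¹)
      (Metric.closedBall (0:ℂ) ε) := by
    have : ∀ w ∈ Metric.closedBall (0:ℂ) ε,
        (Ac - w • (1 : Matrix (Fin s) (Fin s) ℂ))⁻¹
          = ((Ac - w • (1 : Matrix (Fin s) (Fin s) ℂ)).det)⁻¹ •
              (Ac - w • (1 : Matrix (Fin s) (Fin s) ℂ)).adjugate := by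
      intro w _
      rw [Matrix.inv_def, Ring.inverse_eq_inv']
    refine ContinuousOn.congr ?_ this
    refine ContinuousOn.fun_smul ?_ ?_
    · exact (hcont2.continuousOn).inv₀ fun w hw => hball w (by simpa [dist_zero_right] using hw)
    · exact ((continuous_const.sub (continuous_id.smul continuous_const)).matrix_adjugate).continuousOn
  obtain ⟨C₁, hC₁⟩ := hcompact1.exists_bound_of_continuousOn hcontg
  -- bound for the compact part
  set R : ℝ := 1/ε with hR
  have hcompact2 : IsCompact ({z : ℂ | z.re ≤ 0} ∩ Metric.closedBall 0 R) := by
    refine (isCompact_closedBall (0:ℂ) R).inter_left ?_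
    exact isClosed_le (Complex.continuous_re) continuous_const
  have hcontf : ContinuousOn
      (fun z : ℂ => z • ((1 : Matrix (Fin s) (Fin s) ℂ) - z • Ac)⁻¹)
      ({z : ℂ | z.re ≤ 0} ∩ Metric.closedBall 0 R) := by
    have heq : ∀ z ∈ ({z : ℂ | z.re ≤ 0} ∩ Metric.closedBall 0 R),
        z • ((1 : Matrix (Fin s) (Fin s) ℂ) - z • Ac)⁻¹
          = z • (((1 : Matrix (Fin s) (Fin s) ℂ) - z • Ac).det)⁻¹ •
              ((1 : Matrix (Fin s) (Fin s) ℂ) - z • Ac).adjugate := by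
      intro z _
      rw [Matrix.inv_def, Ring.inverse_eq_inv']
    refine ContinuousOn.congr ?_ heq
    refine ContinuousOn.smul continuousOn_id ?_
    refine ContinuousOn.fun_smul ?_ (hcont1.matrix_adjugate.continuousOn)
    exact (hcont1.matrix_det.continuousOn).inv₀ fun z hz => hdet_ne z hz.1
  obtain ⟨C₂, hC₂⟩ := hcompact2.exists_bound_of_continuousOn hcontf
  have hC₁0 : 0 ≤ C₁ := le_trans (norm_nonneg _) (hC₁ 0 (Metric.mem_closedBall_self hε.le))
  refine ⟨max C₁ C₂ + 1, by have := le_max_left C₁ C₂; linarith, fun z hz => ?_⟩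
  by_cases hzR : ‖z‖ ≤ R
  · have := hC₂ z ⟨hz, by simpa [dist_zero_right] using hzR⟩
    calc ‖z • ((1 : Matrix (Fin s) (Fin s) ℂ) - z • Ac)⁻¹‖ ≤ C₂ := this
      _ ≤ max C₁ C₂ + 1 := by
        have := le_max_right C₁ C₂; linarith
  · push_neg at hzR
    have hz0 : z ≠ 0 := by
      intro h; rw [h] at hzR; simp [hR] at hzR; nlinarith [hzR]
    have hzinv : ‖z⁻¹‖ ≤ ε := by
      rw [norm_inv]
      have h2 : (0:ℝ) < ‖z‖ := norm_pos_iff.mpr hz0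
      refine (inv_le_comm₀ h2 hε).mpr ?_
      rw [hR] at hzR
      rw [inv_eq_one_div]
      linarith
    have hMdet : (Ac - z⁻¹ • (1 : Matrix (Fin s) (Fin s) ℂ)).det ≠ 0 := hball _ hzinv
    set M : Matrix (Fin s) (Fin s) ℂ := Ac - z⁻¹ • (1 : Matrix (Fin s) (Fin s) ℂ) with hM
    have hfact : (1 : Matrix (Fin s) (Fin s) ℂ) - z • Ac = (-z) • M := by
      rw [hM, smul_sub, smul_smul]
      simp [mul_inv_cancel₀ hz0, neg_smul]
      abel
    have hMinv : M * M⁻¹ = 1 := Matrix.mul_nonsing_inv M (isUnit_iff_ne_zero.2 hMdet)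
    have hinv : ((1 : Matrix (Fin s) (Fin s) ℂ) - z • Ac)⁻¹ = (-z)⁻¹ • M⁻¹ := by
      rw [hfact]
      refine Matrix.inv_eq_right_inv ?_
      rw [Matrix.smul_mul, Matrix.mul_smul, smul_smul, mul_inv_cancel₀ (neg_ne_zero.2 hz0), hMinv, one_smul]
    rw [hinv, smul_smul]
    have : z * (-z)⁻¹ = -1 := by
      field_simp
    rw [this, neg_smul, one_smul, norm_neg]
    have := hC₁ z⁻¹ (by simpa [dist_zero_right] using hzinv)
    have hmax := le_max_left C₁ C₂
    linarith
end

section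
/- Let A be a real s×s lower-triangular matrix with all diagonal entries strictly positive, and b ∈ ℝ^s. Then there exist constants C > 0 and ε₀ > 0 such that: for every real lower-triangular s×s matrix à with ‖à − A‖ ≤ ε₀, every b̃ ∈ ℝ^s, every z ∈ ℂ with Re(z) ≤ 0, and every y_n ∈ ℂ, the one-step updates y_{n+1} = (1 + z bᵀ(I − zA)⁻¹e)·y_n and ỹ_{n+1} = (1 + z b̃ᵀ(I − zÃ)⁻¹e)·y_n satisfy |ỹ_{n+1} − y_{n+1}| ≤ C·(‖Ã − A‖ + ‖b̃ − b‖)·|y_n|. -/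
open Matrix Finset

attribute [local instance] Matrix.linftyOpNormedAddCommGroup


lemma geom_aux (r : ℝ) (n : ℕ) :
    1 + ∑ k ∈ Finset.range n, r * (1+r)^k = (1+r)^n := by
  induction n with
  | zero => simp
  | succ n ih =>
    rw [Finset.sum_range_succ, ← add_assoc, ih, pow_succ]
    ring

lemma fin_Iio_sum {s : ℕ} (i : Fin s) (f : ℕ → ℝ) :
    ∑ k ∈ Finset.Iio i, f (k : ℕ) = ∑ k ∈ Finset.range (i : ℕ), f k := by
  refine Finset.sum_bij' (fun k _ => (k : ℕ))
    (fun k hk => (⟨k, lt_trans (Finset.mem_range.mp hk) i.isLt⟩ : Fin s))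
    ?_ ?_ ?_ ?_ ?_
  · intro a ha; exact Finset.mem_range.mpr (Fin.lt_def.mp (Finset.mem_Iio.mp ha))
  · intro a ha; exact Finset.mem_Iio.mpr (Fin.lt_def.mpr (Finset.mem_range.mp ha))
  · intro a ha; rfl
  · intro a ha; rfl
  · intro a ha; rfl

lemma habs1 {w : ℂ} (hw : w.re ≤ 0) : 1 ≤ ‖1 - w‖ := by
  have h2 : 1 ≤ (‖1 - w‖)^2 := by
    rw [Complex.sq_norm, Complex.normSq_apply]
    simp only [Complex.sub_re, Complex.sub_im, Complex.one_re, Complex.one_im]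
    nlinarith [sq_nonneg w.im, sq_nonneg w.re]
  nlinarith [norm_nonneg (1 - w)]

lemma habs2 {w : ℂ} (hw : w.re ≤ 0) : ‖w‖ ≤ ‖1 - w‖ := by
  have h2 : (‖w‖)^2 ≤ (‖1 - w‖)^2 := by
    rw [Complex.sq_norm, Complex.sq_norm, Complex.normSq_apply, Complex.normSq_apply]
    simp only [Complex.sub_re, Complex.sub_im, Complex.one_re, Complex.one_im]
    nlinarith
  have := norm_nonneg w
  nlinarith [norm_nonneg (1 - w)]

lemma key {s : ℕ} (δ Mb : ℝ) (hδ : 0 < δ) (hMb0 : 0 ≤ Mb)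
    (B : Matrix (Fin s) (Fin s) ℝ)
    (hlow : ∀ i j : Fin s, i < j → B i j = 0) (hd : ∀ i, δ ≤ B i i)
    (hMb : ∀ i j, |B i j| ≤ Mb) (z : ℂ) (hz : z.re ≤ 0) :
    IsUnit ((1 : Matrix (Fin s) (Fin s) ℂ) - z • B.map Complex.ofReal).det ∧
    ∀ i j : Fin s,
      ‖z * (((1 : Matrix (Fin s) (Fin s) ℂ) - z • B.map Complex.ofReal)⁻¹ i j)‖
        ≤ (1/δ) * (1 + Mb/δ)^(s : ℕ) := by
  set N : Matrix (Fin s) (Fin s) ℂ := 1 - z • B.map Complex.ofReal with hN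
  have hNij : ∀ i j, N i j = (if i = j then 1 else 0) - z * (B i j : ℂ) := by
    intro i j
    simp [hN, Matrix.sub_apply, Matrix.smul_apply, Matrix.map_apply, Matrix.one_apply,
      smul_eq_mul]
  have hre : ∀ i : Fin s, (z * (B i i : ℂ)).re ≤ 0 := by
    intro i
    simp only [Complex.mul_re, Complex.ofReal_re, Complex.ofReal_im, mul_zero, sub_zero]
    exact mul_nonpos_of_nonpos_of_nonneg hz (le_of_lt (lt_of_lt_of_le hδ (hd i)))
  have hone : ∀ i : Fin s, 1 ≤ ‖N i i‖ := by
    intro i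
    have := habs1 (hre i)
    simpa [hNij i i] using this
  have habsz : ∀ i : Fin s, δ * ‖z‖ ≤ ‖N i i‖ := by
    intro i
    have h1 := habs2 (hre i)
    rw [norm_mul, Complex.norm_real, Real.norm_eq_abs,
      abs_of_pos (lt_of_lt_of_le hδ (hd i))] at h1
    have h2 : δ * ‖z‖ ≤ ‖z‖ * B i i := by
      rw [mul_comm]
      exact mul_le_mul_of_nonneg_left (hd i) (norm_nonneg z)
    calc δ * ‖z‖ ≤ ‖z‖ * B i i := h2
      _ ≤ _ := by rw [hNij i i]; simpa using h1
  have hBT : N.BlockTriangular OrderDual.toDual := by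
    intro i j hij
    have hij' : (i : Fin s) < j := hij
    rw [hNij i j, hlow i j hij']
    simp [ne_of_lt hij']
  have hdet : IsUnit N.det := by
    rw [Matrix.det_of_lowerTriangular N hBT, isUnit_iff_ne_zero]
    apply Finset.prod_ne_zero_iff.mpr
    intro i _ h
    have h1 := hone i
    rw [h, norm_zero] at h1
    linarith
  refine ⟨hdet, ?_⟩
  haveI : Invertible N := N.invertibleOfIsUnitDet hdet
  have hinvBT : N⁻¹.BlockTriangular OrderDual.toDual :=
    Matrix.blockTriangular_inv_of_blockTriangular hBT
  have hrec : ∀ i j : Fin s, N i i * (z * N⁻¹ i j) =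
      z * (if i = j then 1 else 0) - ∑ k ∈ Finset.Iio i, N i k * (z * N⁻¹ k j) := by
    intro i j
    have hmul : N * N⁻¹ = 1 := Matrix.mul_nonsing_inv N hdet
    have h0 : ∑ k : Fin s, N i k * N⁻¹ k j = (if i = j then 1 else 0) := by
      have := congr_fun (congr_fun hmul i) j
      simpa [Matrix.mul_apply, Matrix.one_apply] using this
    have h1 : ∑ k ∈ Finset.Iic i, N i k * N⁻¹ k j = ∑ k : Fin s, N i k * N⁻¹ k j := by
      apply Finset.sum_subset (Finset.subset_univ _)
      intro x _ hx
      have hix : i < x := by simpa using hx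
      have hzero : N i x = 0 := by
        rw [hNij, hlow i x hix]
        simp [ne_of_lt hix]
      rw [hzero, zero_mul]
    have h2 : N i i * N⁻¹ i j + ∑ k ∈ Finset.Iio i, N i k * N⁻¹ k j
        = (if i = j then 1 else 0) := by
      rw [← h0, ← h1, ← Finset.Iio_insert, Finset.sum_insert (by simp)]
    have h3 : ∑ k ∈ Finset.Iio i, N i k * (z * N⁻¹ k j)
        = z * ∑ k ∈ Finset.Iio i, N i k * N⁻¹ k j := by
      rw [Finset.mul_sum]; exact Finset.sum_congr rfl (fun k _ => by ring)
    rw [h3]; linear_combination z * h2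
  have main : ∀ n : ℕ, ∀ i j : Fin s, (i : ℕ) < n →
      ‖z * N⁻¹ i j‖ ≤ (1/δ) * (1 + Mb/δ)^(i : ℕ) := by
    intro n
    induction n with
    | zero => intro i j h; omega
    | succ n ih =>
      intro i j hi
      rcases eq_or_ne z 0 with rfl | hz0
      · simp only [zero_mul, norm_zero]
        positivity
      have hNpos : 0 < ‖N i i‖ := lt_of_lt_of_le one_pos (hone i)
      have hterm : ∀ k ∈ Finset.Iio i, ‖N i k * (z * N⁻¹ k j)‖
          ≤ ‖N i i‖ * ((1/δ) * ((Mb/δ) * (1 + Mb/δ)^(k : ℕ))) := by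
        intro k hk
        have hki : k < i := Finset.mem_Iio.mp hk
        have hNik : ‖N i k‖ ≤ ‖z‖ * Mb := by
          rw [hNij i k, if_neg (ne_of_gt hki), zero_sub, norm_neg,
            norm_mul, Complex.norm_real, Real.norm_eq_abs]
          exact mul_le_mul_of_nonneg_left (hMb i k) (norm_nonneg z)
        have hzk : ‖z * N⁻¹ k j‖ ≤ (1/δ) * (1 + Mb/δ)^(k : ℕ) :=
          ih k j (by have := Fin.lt_def.mp hki; omega)
        have hX : (0:ℝ) ≤ (1/δ) * ((Mb/δ) * (1 + Mb/δ)^(k : ℕ)) := by positivity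
        calc ‖N i k * (z * N⁻¹ k j)‖
            = ‖N i k‖ * ‖z * N⁻¹ k j‖ := norm_mul _ _
          _ ≤ (‖z‖ * Mb) * ((1/δ) * (1 + Mb/δ)^(k : ℕ)) :=
              mul_le_mul hNik hzk (norm_nonneg _) (by positivity)
          _ = (δ * ‖z‖) * ((1/δ) * ((Mb/δ) * (1 + Mb/δ)^(k : ℕ))) := by
              field_simp
          _ ≤ ‖N i i‖ * ((1/δ) * ((Mb/δ) * (1 + Mb/δ)^(k : ℕ))) :=
              mul_le_mul_of_nonneg_right (habsz i) hX
      have hite : ‖z * (if i = j then (1:ℂ) else 0)‖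
          ≤ ‖N i i‖ * (1/δ) := by
        by_cases h : i = j
        · rw [if_pos h, mul_one, mul_one_div, le_div_iff₀ hδ]
          linarith [habsz i]
        · rw [if_neg h, mul_zero, norm_zero]
          positivity
      have hgeom : ∑ k ∈ Finset.Iio i, (Mb/δ) * (1 + Mb/δ)^(k : ℕ)
          = (1 + Mb/δ)^(i : ℕ) - 1 := by
        rw [fin_Iio_sum i (fun m => (Mb/δ) * (1 + Mb/δ)^m)]
        linarith [geom_aux (Mb/δ) (i : ℕ)]
      have hSum : ∑ k ∈ Finset.Iio i, ‖N i k * (z * N⁻¹ k j)‖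
          ≤ ‖N i i‖ * ((1/δ) * ((1 + Mb/δ)^(i : ℕ) - 1)) := by
        calc ∑ k ∈ Finset.Iio i, ‖N i k * (z * N⁻¹ k j)‖
            ≤ ∑ k ∈ Finset.Iio i,
                ‖N i i‖ * ((1/δ) * ((Mb/δ) * (1 + Mb/δ)^(k : ℕ))) :=
              Finset.sum_le_sum hterm
          _ = ‖N i i‖ * (1/δ)
              * ∑ k ∈ Finset.Iio i, (Mb/δ) * (1 + Mb/δ)^(k : ℕ) := by
              rw [Finset.mul_sum]
              exact Finset.sum_congr rfl (fun k _ => by ring)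
          _ = ‖N i i‖ * ((1/δ) * ((1 + Mb/δ)^(i : ℕ) - 1)) := by
              rw [hgeom]; ring
      have hmain : ‖N i i‖ * ‖z * N⁻¹ i j‖
          ≤ ‖N i i‖ * ((1/δ) * (1 + Mb/δ)^(i : ℕ)) := by
        rw [← norm_mul, hrec i j]
        calc ‖z * (if i = j then (1:ℂ) else 0)
              - ∑ k ∈ Finset.Iio i, N i k * (z * N⁻¹ k j)‖
            ≤ ‖z * (if i = j then (1:ℂ) else 0)‖
              + ‖∑ k ∈ Finset.Iio i, N i k * (z * N⁻¹ k j)‖ :=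
              norm_sub_le _ _
          _ ≤ ‖N i i‖ * (1/δ)
              + ‖N i i‖ * ((1/δ) * ((1 + Mb/δ)^(i : ℕ) - 1)) :=
              add_le_add hite ((norm_sum_le _ _).trans hSum)
          _ = ‖N i i‖ * ((1/δ) * (1 + Mb/δ)^(i : ℕ)) := by ring
      exact le_of_mul_le_mul_left hmain hNpos
  intro i j
  have h1 : ‖z * N⁻¹ i j‖ ≤ (1/δ) * (1 + Mb/δ)^(i : ℕ) :=
    main s i j i.isLt
  have h2 : (1 + Mb/δ)^(i : ℕ) ≤ (1 + Mb/δ)^(s : ℕ) := by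
    apply pow_le_pow_right₀ (by have := div_nonneg hMb0 hδ.le; linarith) (le_of_lt i.isLt)
  calc ‖z * N⁻¹ i j‖ ≤ (1/δ) * (1 + Mb/δ)^(i : ℕ) := h1
    _ ≤ (1/δ) * (1 + Mb/δ)^(s : ℕ) :=
        mul_le_mul_of_nonneg_left h2 (by positivity)


lemma entry_le {s : ℕ} (B : Matrix (Fin s) (Fin s) ℝ) (i j : Fin s) : |B i j| ≤ ‖B‖ := by
  have h1 : ‖B i j‖₊ ≤ ‖B‖₊ := by
    rw [Matrix.linfty_opNNNorm_def]
    exact le_trans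
      (Finset.single_le_sum (f := fun j => ‖B i j‖₊) (fun _ _ => zero_le) (Finset.mem_univ j))
      (Finset.le_sup (f := fun i => ∑ j, ‖B i j‖₊) (Finset.mem_univ i))
  calc |B i j| = ‖B i j‖ := (Real.norm_eq_abs _).symm
    _ ≤ ‖B‖ := h1

/-- Rounding the coefficients of a DIRK method with strictly positive diagonal
changes one step on the test equation by at most
`C·(‖Ã − A‖ + ‖b̃ − b‖)·|yₙ|`, uniformly over the closed left half-plane. -/
theorem stmt_10 (s : ℕ) (A : Matrix (Fin s) (Fin s) ℝ) (b : Fin s → ℝ)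
    (hlow : ∀ i j : Fin s, i < j → A i j = 0)
    (hdiag : ∀ i : Fin s, 0 < A i i) :
    ∃ C : ℝ, 0 < C ∧ ∃ ε₀ : ℝ, 0 < ε₀ ∧
      ∀ At : Matrix (Fin s) (Fin s) ℝ,
        (∀ i j : Fin s, i < j → At i j = 0) → ‖At - A‖ ≤ ε₀ →
      ∀ bt : Fin s → ℝ, ∀ z : ℂ, z.re ≤ 0 → ∀ yn : ℂ,
        ‖((1 + z * ((fun i => (bt i : ℂ)) ⬝ᵥ
              (((1 : Matrix (Fin s) (Fin s) ℂ) - z • At.map Complex.ofReal)⁻¹ *ᵥ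
                (fun _ => 1)))) * yn
           - (1 + z * ((fun i => (b i : ℂ)) ⬝ᵥ
              (((1 : Matrix (Fin s) (Fin s) ℂ) - z • A.map Complex.ofReal)⁻¹ *ᵥ
                (fun _ => 1)))) * yn)‖
          ≤ C * (‖At - A‖ + ‖bt - b‖) * ‖yn‖ := by
  rcases Nat.eq_zero_or_pos s with hs0 | hspos
  · subst hs0
    refine ⟨1, one_pos, 1, one_pos, ?_⟩
    intro At hAtlow hAte bt z hz yn
    have hdp : ∀ (w : Fin 0 → ℂ) (x : Fin 0 → ℂ), w ⬝ᵥ x = 0 := fun w x => by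
      simp [dotProduct]
    rw [hdp, hdp]
    simp only [mul_zero, add_zero, sub_self, norm_zero]
    have h1 : (0:ℝ) ≤ ‖At - A‖ + ‖bt - b‖ := by positivity
    have h2 : (0:ℝ) ≤ ‖yn‖ := norm_nonneg yn
    nlinarith
  -- main case
  haveI : Nonempty (Fin s) := Fin.pos_iff_nonempty.mp hspos
  obtain ⟨a, ha, hapos, haA⟩ : ∃ x : ℝ, x = Finset.univ.inf' Finset.univ_nonempty
      (fun i : Fin s => A i i) ∧ 0 < x ∧ ∀ i, x ≤ A i i := by
    refine ⟨_, rfl, ?_, ?_⟩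
    · rw [Finset.lt_inf'_iff]; exact fun i _ => hdiag i
    · exact fun i => Finset.inf'_le _ (Finset.mem_univ i)
  obtain ⟨δ, hδa, hδ⟩ : ∃ x : ℝ, x = a/2 ∧ 0 < x := ⟨a/2, rfl, by positivity⟩
  obtain ⟨Mb, hMba, hMb0⟩ : ∃ x : ℝ, x = ‖A‖ + δ ∧ 0 ≤ x :=
    ⟨_, rfl, by have := norm_nonneg A; linarith⟩
  obtain ⟨C₁, hC₁e, hC₁⟩ : ∃ x : ℝ, x = (1/δ) * (1 + Mb/δ)^(s:ℕ) ∧ 0 < x := by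
    refine ⟨_, rfl, mul_pos (by positivity) (pow_pos ?_ _)⟩
    have := div_nonneg hMb0 hδ.le; linarith
  have hC : (0:ℝ) < (s^2 * C₁ + s^4 * (‖b‖+1) * C₁^2) + 1 := by positivity
  refine ⟨(s^2 * C₁ + s^4 * (‖b‖+1) * C₁^2) + 1, hC, δ, hδ, ?_⟩
  intro At hAtlow hAte bt z hz yn
  have hAd : ∀ i, δ ≤ A i i := fun i => by have := haA i; linarith
  have hentry : ∀ i j, |At i j - A i j| ≤ ‖At - A‖ := by
    intro i j
    have := entry_le (At - A) i j
    rwa [Matrix.sub_apply] at this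
  have hAtd : ∀ i, δ ≤ At i i := by
    intro i
    have h3 := abs_le.mp ((hentry i i).trans hAte)
    have h4 := haA i
    linarith [h3.1]
  have hAM : ∀ i j, |A i j| ≤ Mb := by
    intro i j
    have := entry_le A i j
    linarith
  have hAtM : ∀ i j, |At i j| ≤ Mb := by
    intro i j
    have h1 := (hentry i j).trans hAte
    have h2 := entry_le A i j
    have h3 := abs_sub_abs_le_abs_sub (At i j) (A i j)
    linarith
  obtain ⟨hdetN, hNb'⟩ := key δ Mb hδ hMb0 At hAtlow hAtd hAtM z hz
  obtain ⟨hdetM, hMb'⟩ := key δ Mb hδ hMb0 A hlow hAd hAM z hz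
  set e : Fin s → ℂ := (fun _ => 1) with he
  set Atc : Matrix (Fin s) (Fin s) ℂ := At.map Complex.ofReal with hAtc
  set Ac : Matrix (Fin s) (Fin s) ℂ := A.map Complex.ofReal with hAc
  set Nt : Matrix (Fin s) (Fin s) ℂ := 1 - z • Atc with hNt
  set Nm : Matrix (Fin s) (Fin s) ℂ := 1 - z • Ac with hNm
  set u : Fin s → ℂ := Nt⁻¹ *ᵥ e with hu
  set v : Fin s → ℂ := Nm⁻¹ *ᵥ e with hv
  set btc : Fin s → ℂ := fun i => (bt i : ℂ) with hbtc
  set bc : Fin s → ℂ := fun i => (b i : ℂ) with hbc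
  have hNb : ∀ i j, ‖z * Nt⁻¹ i j‖ ≤ C₁ := by
    intro i j; rw [hC₁e]; exact hNb' i j
  have hMbd : ∀ i j, ‖z * Nm⁻¹ i j‖ ≤ C₁ := by
    intro i j; rw [hC₁e]; exact hMb' i j
  -- entry bounds
  have hE : ∀ k l, ‖(Atc - Ac) k l‖ ≤ ‖At - A‖ := by
    intro k l
    have : (Atc - Ac) k l = ((At k l - A k l : ℝ) : ℂ) := by
      simp [hAtc, hAc, Matrix.sub_apply, Matrix.map_apply]
    rw [this, Complex.norm_real, Real.norm_eq_abs]
    exact hentry k l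
  have hdb : ∀ i, ‖(btc - bc) i‖ ≤ ‖bt - b‖ := by
    intro i
    have h1 : (btc - bc) i = ((bt i - b i : ℝ) : ℂ) := by
      simp [hbtc, hbc, Pi.sub_apply]
    rw [h1, Complex.norm_real, Real.norm_eq_abs]
    have := norm_le_pi_norm (bt - b) i
    rwa [Pi.sub_apply, Real.norm_eq_abs] at this
  have hbB : ∀ i, ‖bc i‖ ≤ ‖b‖ := by
    intro i
    rw [hbc]
    simp only [Complex.norm_real, Real.norm_eq_abs]
    have := norm_le_pi_norm b i
    rwa [Real.norm_eq_abs] at this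
  -- bounds on z*u and z*v
  have hzu : ∀ i, ‖z * u i‖ ≤ s * C₁ := by
    intro i
    have h1 : z * u i = ∑ k, z * Nt⁻¹ i k := by
      show z * ((fun j => Nt⁻¹ i j) ⬝ᵥ e) = _
      simp only [dotProduct, he, mul_one]
      rw [Finset.mul_sum]
    rw [h1]
    calc ‖∑ k, z * Nt⁻¹ i k‖ ≤ ∑ k, ‖z * Nt⁻¹ i k‖ :=
          norm_sum_le _ _
      _ ≤ ∑ _k : Fin s, C₁ := Finset.sum_le_sum (fun k _ => hNb i k)
      _ = s * C₁ := by rw [Finset.sum_const, Finset.card_univ, Fintype.card_fin,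
            nsmul_eq_mul]
  have hzv : ∀ i, ‖z * v i‖ ≤ s * C₁ := by
    intro i
    have h1 : z * v i = ∑ k, z * Nm⁻¹ i k := by
      show z * ((fun j => Nm⁻¹ i j) ⬝ᵥ e) = _
      simp only [dotProduct, he, mul_one]
      rw [Finset.mul_sum]
    rw [h1]
    calc ‖∑ k, z * Nm⁻¹ i k‖ ≤ ∑ k, ‖z * Nm⁻¹ i k‖ :=
          norm_sum_le _ _
      _ ≤ ∑ _k : Fin s, C₁ := Finset.sum_le_sum (fun k _ => hMbd i k)
      _ = s * C₁ := by rw [Finset.sum_const, Finset.card_univ, Fintype.card_fin,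
            nsmul_eq_mul]
  -- difference identity
  have hdiff : Nt⁻¹ - Nm⁻¹ = Nt⁻¹ * (Nm - Nt) * Nm⁻¹ := by
    have h1 : Nt⁻¹ * Nm * Nm⁻¹ = Nt⁻¹ := by
      rw [Matrix.mul_assoc, Matrix.mul_nonsing_inv _ hdetM, Matrix.mul_one]
    have h2 : Nt⁻¹ * Nt * Nm⁻¹ = Nm⁻¹ := by
      rw [Matrix.nonsing_inv_mul _ hdetN, Matrix.one_mul]
    calc Nt⁻¹ - Nm⁻¹ = Nt⁻¹ * Nm * Nm⁻¹ - Nt⁻¹ * Nt * Nm⁻¹ := by rw [h1, h2]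
      _ = Nt⁻¹ * (Nm - Nt) * Nm⁻¹ := by noncomm_ring
  have hMN : Nm - Nt = z • (Atc - Ac) := by
    rw [hNm, hNt, smul_sub]
    abel
  have huv : u - v = Nt⁻¹ *ᵥ ((z • (Atc - Ac)) *ᵥ v) := by
    rw [hu, hv, ← Matrix.sub_mulVec, hdiff, hMN, ← Matrix.mulVec_mulVec,
      ← Matrix.mulVec_mulVec]
  -- scalar form of the difference
  have hzuv : ∀ i, z * (u i - v i)
      = ∑ k, (z * Nt⁻¹ i k) * (∑ l, (Atc - Ac) k l * (z * v l)) := by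
    intro i
    have h1 : u i - v i = (Nt⁻¹ *ᵥ ((z • (Atc - Ac)) *ᵥ v)) i := by
      rw [← huv]; rfl
    rw [h1]
    show z * ((fun j => Nt⁻¹ i j) ⬝ᵥ fun k => ((z • (Atc - Ac)) *ᵥ v) k) = _
    simp only [dotProduct, Matrix.mulVec, Matrix.smul_apply, smul_eq_mul]
    rw [Finset.mul_sum]
    refine Finset.sum_congr rfl (fun k _ => ?_)
    show z * (Nt⁻¹ i k * ((fun l => z • (Atc - Ac) k l) ⬝ᵥ v)) = _
    simp only [dotProduct, smul_eq_mul]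
    rw [Finset.mul_sum, Finset.mul_sum, Finset.mul_sum]
    refine Finset.sum_congr rfl (fun l _ => ?_)
    ring
  -- inner bound
  have hinner : ∀ k, ‖∑ l, (Atc - Ac) k l * (z * v l)‖
      ≤ s * (‖At - A‖ * (s * C₁)) := by
    intro k
    calc ‖∑ l, (Atc - Ac) k l * (z * v l)‖
        ≤ ∑ l, ‖(Atc - Ac) k l * (z * v l)‖ := norm_sum_le _ _
      _ ≤ ∑ _l : Fin s, ‖At - A‖ * (s * C₁) := by
          refine Finset.sum_le_sum (fun l _ => ?_)
          rw [norm_mul]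
          exact mul_le_mul (hE k l) (hzv l) (norm_nonneg _) (norm_nonneg _)
      _ = s * (‖At - A‖ * (s * C₁)) := by
          rw [Finset.sum_const, Finset.card_univ, Fintype.card_fin, nsmul_eq_mul]
  have houter : ∀ i, ‖z * (u i - v i)‖
      ≤ s * (C₁ * (s * (‖At - A‖ * (s * C₁)))) := by
    intro i
    rw [hzuv i]
    calc ‖∑ k, (z * Nt⁻¹ i k) * (∑ l, (Atc - Ac) k l * (z * v l))‖
        ≤ ∑ k, ‖(z * Nt⁻¹ i k) * (∑ l, (Atc - Ac) k l * (z * v l))‖ :=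
          norm_sum_le _ _
      _ ≤ ∑ _k : Fin s, C₁ * (s * (‖At - A‖ * (s * C₁))) := by
          refine Finset.sum_le_sum (fun k _ => ?_)
          rw [norm_mul]
          refine mul_le_mul (hNb i k) (hinner k) (norm_nonneg _) hC₁.le
      _ = s * (C₁ * (s * (‖At - A‖ * (s * C₁)))) := by
          rw [Finset.sum_const, Finset.card_univ, Fintype.card_fin, nsmul_eq_mul]
  -- decomposition
  have hdec : z * (btc ⬝ᵥ u) - z * (bc ⬝ᵥ v)
      = z * ((btc - bc) ⬝ᵥ u) + z * (bc ⬝ᵥ (u - v)) := by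
    rw [sub_dotProduct, dotProduct_sub]
    ring
  have ht1 : ‖z * ((btc - bc) ⬝ᵥ u)‖ ≤ (s:ℝ)^2 * C₁ * ‖bt - b‖ := by
    have h1 : z * ((btc - bc) ⬝ᵥ u) = ∑ i, (btc - bc) i * (z * u i) := by
      show z * (∑ i, (btc - bc) i * u i) = _
      rw [Finset.mul_sum]
      exact Finset.sum_congr rfl (fun i _ => by ring)
    rw [h1]
    calc ‖∑ i, (btc - bc) i * (z * u i)‖
        ≤ ∑ i, ‖(btc - bc) i * (z * u i)‖ := norm_sum_le _ _
      _ ≤ ∑ _i : Fin s, ‖bt - b‖ * (s * C₁) := by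
          refine Finset.sum_le_sum (fun i _ => ?_)
          rw [norm_mul]
          exact mul_le_mul (hdb i) (hzu i) (norm_nonneg _) (norm_nonneg _)
      _ = s * (‖bt - b‖ * (s * C₁)) := by
          rw [Finset.sum_const, Finset.card_univ, Fintype.card_fin, nsmul_eq_mul]
      _ = (s:ℝ)^2 * C₁ * ‖bt - b‖ := by ring
  have ht2 : ‖z * (bc ⬝ᵥ (u - v))‖ ≤ (s:ℝ)^4 * ‖b‖ * C₁^2 * ‖At - A‖ := by
    have h1 : z * (bc ⬝ᵥ (u - v)) = ∑ i, bc i * (z * (u i - v i)) := by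
      show z * (∑ i, bc i * (u - v) i) = _
      rw [Finset.mul_sum]
      exact Finset.sum_congr rfl (fun i _ => by rw [Pi.sub_apply]; ring)
    rw [h1]
    calc ‖∑ i, bc i * (z * (u i - v i))‖
        ≤ ∑ i, ‖bc i * (z * (u i - v i))‖ := norm_sum_le _ _
      _ ≤ ∑ _i : Fin s, ‖b‖ * (s * (C₁ * (s * (‖At - A‖ * (s * C₁))))) := by
          refine Finset.sum_le_sum (fun i _ => ?_)
          rw [norm_mul]
          exact mul_le_mul (hbB i) (houter i) (norm_nonneg _) (norm_nonneg _)
      _ = s * (‖b‖ * (s * (C₁ * (s * (‖At - A‖ * (s * C₁)))))) := by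
          rw [Finset.sum_const, Finset.card_univ, Fintype.card_fin, nsmul_eq_mul]
      _ = (s:ℝ)^4 * ‖b‖ * C₁^2 * ‖At - A‖ := by ring
  -- assemble
  have hfact : (1 + z * (btc ⬝ᵥ u)) * yn - (1 + z * (bc ⬝ᵥ v)) * yn
      = (z * (btc ⬝ᵥ u) - z * (bc ⬝ᵥ v)) * yn := by ring
  rw [hfact, norm_mul]
  have hgoal : ‖z * (btc ⬝ᵥ u) - z * (bc ⬝ᵥ v)‖
      ≤ ((s:ℝ)^2 * C₁ + (s:ℝ)^4 * (‖b‖+1) * C₁^2 + 1) * (‖At - A‖ + ‖bt - b‖) := by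
    rw [hdec]
    have h2 := (norm_add_le (z * ((btc - bc) ⬝ᵥ u)) (z * (bc ⬝ᵥ (u - v)))).trans
      (add_le_add ht1 ht2)
    have hE0 : (0:ℝ) ≤ ‖At - A‖ := norm_nonneg _
    have hdb0 : (0:ℝ) ≤ ‖bt - b‖ := norm_nonneg _
    have hb0 : (0:ℝ) ≤ ‖b‖ := norm_nonneg _
    have hs0 : (0:ℝ) ≤ (s:ℝ) := Nat.cast_nonneg s
    nlinarith [mul_nonneg (mul_nonneg (pow_nonneg hs0 2) hC₁.le) hE0,
      mul_nonneg (mul_nonneg (mul_nonneg (pow_nonneg hs0 4) (by linarith : (0:ℝ) ≤ ‖b‖+1))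
        (pow_nonneg hC₁.le 2)) hdb0,
      mul_nonneg (mul_nonneg (pow_nonneg hs0 4) (pow_nonneg hC₁.le 2)) hE0]
  calc ‖z * (btc ⬝ᵥ u) - z * (bc ⬝ᵥ v)‖ * ‖yn‖
      ≤ ((s:ℝ)^2 * C₁ + (s:ℝ)^4 * (‖b‖+1) * C₁^2 + 1) * (‖At - A‖ + ‖bt - b‖)
        * ‖yn‖ :=
        mul_le_mul_of_nonneg_right hgoal (norm_nonneg yn)
end
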